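/- For the diagonal-orbit system, if the classical pointwise ergodic theorem held in the form 'for every bounded measurable F, (1/N)∑_{n=1}^N F(φⁿ z) → ∫ F dμ^{⊗k} for ν-a.e. z', then applying it to F = 1_A with A = ⋃_{n∈ℤ} φⁿΔ yields a contradiction, since the averages are identically 1 ν-a.e. while μ^{⊗k}(A) = 0. -/

import Mathlib

open MeasureTheory Filter Topology
open scoped ENNReal NNReal

/-- The product transformation `φ = T₁ × ⋯ × T_k` on `X^k`. -/
noncomputable def phi {X : Type*} (k : ℕ) (T : Fin k → Equiv.Perm X) :
    Equiv.Perm (Fin k → X) :=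
  Equiv.piCongrRight T

/-- The diagonal measure `μ_Δ`, the pushforward of `μ` under `x ↦ (x,…,x)`. -/
noncomputable def muDelta {X : Type*} [MeasurableSpace X] (μ : Measure X) (k : ℕ) :
    Measure (Fin k → X) :=
  Measure.map (fun x _ => x) μ

/-- The diagonal-orbit measure `ν(A) = (1/3) ∑_{n∈ℤ} 2^{-|n|} μ_Δ(φⁿ A)`.
Note `μ_Δ(φⁿ A) = (φ^{-n})_* μ_Δ (A)`. -/
noncomputable def nu {X : Type*} [MeasurableSpace X] (μ : Measure X) (k : ℕ)
    (T : Fin k → Equiv.Perm X) : Measure (Fin k → X) :=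
  (3 : ℝ≥0∞)⁻¹ • Measure.sum (fun n : ℤ =>
    (2 : ℝ≥0∞)⁻¹ ^ n.natAbs • Measure.map (⇑(phi k T ^ (-n))) (muDelta μ k))

theorem pointwise_ergodic_theorem_fails {X : Type*} [MeasurableSpace X] (μ : Measure X) [IsProbabilityMeasure μ]
    (k : ℕ) (T : Fin k → Equiv.Perm X)
    (hTmeas : ∀ i, Measurable (T i)) (hTmeas' : ∀ i, Measurable (T i).symm)
    (hTpres : ∀ i, MeasurePreserving (T i) μ μ)
    (hcomm : ∀ i j, ((T i : X → X) ∘ (T j : X → X)) = ((T j : X → X) ∘ (T i : X → X)))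
    (Δ : Set (Fin k → X)) (hΔ : Δ = Set.range (fun x : X => fun _ : Fin k => x))
    (hΔmeas : ∀ n : ℤ, MeasurableSet (⇑(phi k T ^ n) '' Δ))
    (hprod : ∀ n : ℤ, (Measure.pi fun _ : Fin k => μ) (⇑(phi k T ^ n) '' Δ) = 0)
    (hPET : ∀ F : (Fin k → X) → ℝ, Measurable F → (∃ C : ℝ, ∀ z, |F z| ≤ C) →
        ∀ᵐ z ∂(nu μ k T),
          Tendsto (fun N : ℕ => (N : ℝ)⁻¹ * ∑ n ∈ Finset.Icc 1 N, F ((phi k T ^ n) z))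
            atTop (𝓝 (∫ z, F z ∂(Measure.pi fun _ : Fin k => μ)))) :
    False := by
  set π := (Measure.pi fun _ : Fin k => μ) with hπ
  set φ := phi k T with hφ
  set A : Set (Fin k → X) := ⋃ n : ℤ, ⇑(φ ^ n) '' Δ with hA
  have hAmeas : MeasurableSet A := MeasurableSet.iUnion hΔmeas
  have hA0 : π A = 0 := measure_iUnion_null hprod
  have key : ∀ (a b : ℤ) (w : Fin k → X), (φ ^ (a + b)) w = (φ ^ a) ((φ ^ b) w) := by
    intro a b w; rw [zpow_add, Equiv.Perm.mul_apply]
  -- invariance of A under integer powers of φ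
  have hinv : ∀ g : ℤ, ⇑(φ ^ g) ⁻¹' A = A := by
    intro g
    ext z
    simp only [hA, Set.mem_preimage, Set.mem_iUnion]
    constructor
    · rintro ⟨m, w, hw, hwz⟩
      refine ⟨m - g, w, hw, ?_⟩
      have h1 : (φ ^ g) ((φ ^ (m - g)) w) = (φ ^ g) z := by
        rw [← key, show g + (m - g) = m from by ring, hwz]
      exact (φ ^ g).injective h1
    · rintro ⟨m, w, hw, hwz⟩
      exact ⟨g + m, w, hw, by rw [key, hwz]⟩
  -- natural-number version: if z ∈ A then φ^n z ∈ A
  have hinvN : ∀ (n : ℕ) (z : Fin k → X), z ∈ A → (φ ^ n) z ∈ A := by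
    intro n z hz
    have h1 : z ∈ ⇑(φ ^ (n : ℤ)) ⁻¹' A := by rw [hinv]; exact hz
    have h2 : (φ ^ (n : ℤ)) z ∈ A := h1
    rwa [zpow_natCast] at h2
  -- the diagonal is contained in A
  have hΔA : Δ ⊆ A := by
    intro z hz
    refine Set.mem_iUnion.2 ⟨0, ?_⟩
    simpa using hz
  -- μΔ (Aᶜ) = 0
  have hdiag : Measurable (fun x : X => fun _ : Fin k => x) :=
    measurable_pi_lambda _ fun _ => measurable_id
  have hmuDeltaAc : muDelta μ k Aᶜ = 0 := by
    rw [muDelta, Measure.map_apply hdiag hAmeas.compl]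
    have h1 : (fun x : X => fun _ : Fin k => x) ⁻¹' Aᶜ = ∅ := by
      ext x
      simp only [Set.mem_preimage, Set.mem_compl_iff, Set.mem_empty_iff_false, iff_false,
        not_not]
      exact hΔA (by rw [hΔ]; exact ⟨x, rfl⟩)
    rw [h1, measure_empty]
  -- ν(Aᶜ) = 0
  have hnuAc : nu μ k T Aᶜ = 0 := by
    rw [nu, Measure.smul_apply, Measure.sum_apply _ hAmeas.compl]
    have hterm : ∀ n : ℤ,
        ((2 : ℝ≥0∞)⁻¹ ^ n.natAbs • Measure.map (⇑(phi k T ^ (-n))) (muDelta μ k)) Aᶜ = 0 := by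
      intro n
      rw [Measure.smul_apply]
      by_cases hm : AEMeasurable (⇑(phi k T ^ (-n))) (muDelta μ k)
      · rw [Measure.map_apply_of_aemeasurable hm hAmeas.compl]
        have h1 : ⇑(phi k T ^ (-n)) ⁻¹' Aᶜ = Aᶜ := by
          rw [Set.preimage_compl, ← hφ, hinv (-n)]
        rw [h1, hmuDeltaAc, smul_zero]
      · rw [Measure.map_of_not_aemeasurable hm]
        simp
    simp only [hterm, tsum_zero, smul_zero]
  -- ν is nonzero
  have hmuDeltaUniv : muDelta μ k Set.univ = 1 := by
    rw [muDelta, Measure.map_apply hdiag MeasurableSet.univ]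
    simp
  have hnu_ne : nu μ k T ≠ 0 := by
    intro h0
    have h1 : nu μ k T Set.univ = 0 := by rw [h0]; simp
    rw [nu, Measure.smul_apply, Measure.sum_apply _ MeasurableSet.univ] at h1
    have hterm0 : ((2 : ℝ≥0∞)⁻¹ ^ (0 : ℤ).natAbs •
        Measure.map (⇑(phi k T ^ (-(0 : ℤ)))) (muDelta μ k)) Set.univ = 1 := by
      simp only [neg_zero, zpow_zero, Int.natAbs_zero, pow_zero, one_smul,
        Equiv.Perm.coe_one, Measure.map_id]
      exact hmuDeltaUniv
    have hge : (1 : ℝ≥0∞) ≤ ∑' n : ℤ,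
        ((2 : ℝ≥0∞)⁻¹ ^ n.natAbs • Measure.map (⇑(phi k T ^ (-n))) (muDelta μ k)) Set.univ :=
      hterm0 ▸ ENNReal.le_tsum (0 : ℤ)
    rw [smul_eq_mul] at h1
    rcases mul_eq_zero.mp h1 with h | h
    · exact (ENNReal.inv_ne_zero.mpr (by norm_num)) h
    · rw [h] at hge; simp at hge
  -- apply the hypothetical pointwise ergodic theorem to the indicator of A
  set F : (Fin k → X) → ℝ := A.indicator (fun _ => 1) with hF
  have hFmeas : Measurable F := (measurable_const).indicator hAmeas
  have hFbdd : ∃ C : ℝ, ∀ z, |F z| ≤ C := by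
    refine ⟨1, fun z => ?_⟩
    by_cases hz : z ∈ A <;> simp [hF, Set.indicator_apply, hz]
  have hint : (∫ z, F z ∂π) = 0 := by
    have h1 : (∫ z, F z ∂π) = (π A).toReal := by
      rw [hF]; exact MeasureTheory.integral_indicator_one hAmeas
    rw [h1, hA0]; simp
  have hae := hPET F hFmeas hFbdd
  rw [hint] at hae
  have haeA : ∀ᵐ z ∂(nu μ k T), z ∈ A := by
    rw [MeasureTheory.ae_iff]
    exact hnuAc
  have hcontr : ∀ᵐ z ∂(nu μ k T), False := by
    filter_upwards [hae, haeA] with z hzT hzA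
    have hsum : ∀ N : ℕ, (∑ n ∈ Finset.Icc 1 N, F ((φ ^ n) z)) = N := by
      intro N
      have h1 : ∀ n ∈ Finset.Icc 1 N, F ((φ ^ n) z) = 1 := by
        intro n _
        have := hinvN n z hzA
        simp [hF, Set.indicator_apply, this]
      rw [Finset.sum_congr rfl h1]
      simp [Nat.card_Icc]
    have hone : Tendsto (fun N : ℕ => (N : ℝ)⁻¹ * ∑ n ∈ Finset.Icc 1 N, F ((φ ^ n) z))
        atTop (𝓝 1) := by
      have hev : ∀ᶠ N : ℕ in atTop,
          (N : ℝ)⁻¹ * ∑ n ∈ Finset.Icc 1 N, F ((φ ^ n) z) = 1 := by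
        filter_upwards [eventually_ge_atTop 1] with N hN
        have hN' : (N : ℝ) ≠ 0 := Nat.cast_ne_zero.mpr (by omega)
        rw [hsum N, inv_mul_cancel₀ hN']
      exact Tendsto.congr' (hev.mono fun N h => h.symm) tendsto_const_nhds
    have := tendsto_nhds_unique hone hzT
    norm_num at this
  rw [MeasureTheory.ae_iff] at hcontr
  simp only [not_false_eq_true, Set.setOf_true] at hcontr
  exact hnu_ne (Measure.measure_univ_eq_zero.mp hcontr)
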